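/- Let (C(G), w) be a polymer model with q spins on an n-vertex graph G of maximum degree at most Δ ≥ 3, satisfying the polymer sampling condition w_γ ≤ e^{−τ|γ|} with constant τ ≥ 5 + 3·log((q−1)Δ). Let ε > 0 and k = 3·log(2n/ε)/(2τ). Then the truncated partition function Z_k(G) = Σ_{Γ∈Ω_k} Π_{γ∈Γ} w_γ satisfies Z_k(G) ≤ Z(G) ≤ e^{ε}·Z_k(G), and the total variation distance between the Gibbs measures μ_G and μ_{G,k} is at most ε. -/

import Mathlib

open Finset

attribute [local instance] Classical.propDecidable

/-- A polymer in a subset polymer model: a nonempty connected set of vertices together with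
an assignment of non-ground-state spins to its vertices. -/
structure Polymer {V : Type} (G : SimpleGraph V) (q : ℕ) (g : V → Fin q) where
  verts : Finset V
  nonempty : verts.Nonempty
  connected : (G.induce (↑verts : Set V)).Connected
  spin : V → Fin q
  spin_ne : ∀ v ∈ verts, spin v ≠ g v
  spin_ground : ∀ v ∉ verts, spin v = g v

namespace Polymer

variable {V : Type} {G : SimpleGraph V} {q : ℕ} {g : V → Fin q}

/-- The size of a polymer: its number of vertices. -/
def size (γ : Polymer G q g) : ℕ := γ.verts.card

/-- Two polymers are incompatible if their vertex sets are at graph distance at most 1. -/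
def Incompat (γ γ' : Polymer G q g) : Prop :=
  ∃ u ∈ γ.verts, ∃ u' ∈ γ'.verts, u = u' ∨ G.Adj u u'

end Polymer

section PolymerModel

variable {V : Type} [Fintype V] [DecidableEq V] {G : SimpleGraph V} {q : ℕ} {g : V → Fin q}

/-- The state space `Ω`: sets of pairwise compatible allowed polymers. -/
noncomputable def polymerOmega (C : Finset (Polymer G q g)) :
    Finset (Finset (Polymer G q g)) :=
  C.powerset.filter fun Γ => ∀ γ ∈ Γ, ∀ γ' ∈ Γ, γ ≠ γ' → ¬ γ.Incompat γ'

/-- The weight of a polymer configuration. -/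
noncomputable def configWeight (w : Polymer G q g → ℝ) (Γ : Finset (Polymer G q g)) : ℝ :=
  ∏ γ ∈ Γ, w γ

/-- The partition function of the polymer model. -/
noncomputable def polymerZ (C : Finset (Polymer G q g)) (w : Polymer G q g → ℝ) : ℝ :=
  ∑ Γ ∈ polymerOmega C, configWeight w Γ

/-- The Gibbs measure of the polymer model. -/
noncomputable def polymerMu (C : Finset (Polymer G q g)) (w : Polymer G q g → ℝ)
    (Γ : Finset (Polymer G q g)) : ℝ :=
  configWeight w Γ / polymerZ C w

/-- The state space `Ω_k` of the truncated polymer model: configurations all of whose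
polymers have size at most `k`. -/
noncomputable def polymerOmegaTrunc (C : Finset (Polymer G q g)) (k : ℝ) :
    Finset (Finset (Polymer G q g)) :=
  (polymerOmega C).filter fun Γ => ∀ γ ∈ Γ, (γ.size : ℝ) ≤ k

/-- The truncated partition function `Z_k(G)`. -/
noncomputable def polymerZtrunc (C : Finset (Polymer G q g)) (w : Polymer G q g → ℝ)
    (k : ℝ) : ℝ :=
  ∑ Γ ∈ polymerOmegaTrunc C k, configWeight w Γ

/-- The Gibbs measure `μ_{G,k}` of the truncated polymer model, extended by `0` off `Ω_k`. -/
noncomputable def polymerMuTrunc (C : Finset (Polymer G q g)) (w : Polymer G q g → ℝ)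
    (k : ℝ) (Γ : Finset (Polymer G q g)) : ℝ :=
  if Γ ∈ polymerOmegaTrunc C k then configWeight w Γ / polymerZtrunc C w k else 0

end PolymerModel

set_option linter.unusedSectionVars false
set_option linter.unusedVariables false
set_option linter.deprecated false
set_option maxHeartbeats 1000000

section BFS
variable {V : Type} [Fintype V] [DecidableEq V]

noncomputable def vidx {V : Type} [Fintype V] : V → ℕ := fun v => ((Fintype.equivFin V) v : ℕ)

lemma vidx_injective : Function.Injective (vidx (V := V)) :=
  fun a b h => (Fintype.equivFin V).injective (Fin.val_injective h)

noncomputable def vle : V → V → Prop := fun a b => vidx a ≤ vidx b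

noncomputable instance : IsTrans V vle := ⟨fun _ _ _ h h' => le_trans h h'⟩
noncomputable instance : IsAntisymm V vle := ⟨fun _ _ h h' => vidx_injective (le_antisymm h h')⟩
noncomputable instance : IsTotal V vle := ⟨fun a b => le_total _ _⟩

noncomputable def ssort (B : Finset V) : List V := B.sort vle

lemma ssort_sorted (B : Finset V) : List.Pairwise vle (ssort B) := Finset.pairwise_sort _ _
lemma ssort_nodup (B : Finset V) : (ssort B).Nodup := Finset.sort_nodup _ _
lemma mem_ssort {B : Finset V} {a : V} : a ∈ ssort B ↔ a ∈ B := Finset.mem_sort _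

variable (G : SimpleGraph V)

noncomputable def nrank (u w : V) : ℕ :=
  ((G.neighborFinset u).filter fun x => vidx x < vidx w).card

lemma nrank_lt_card {u w : V} (h : w ∈ G.neighborFinset u) :
    nrank G u w < (G.neighborFinset u).card := by
  apply Finset.card_lt_card
  constructor
  · exact Finset.filter_subset _ _
  · intro hsub
    have := hsub h
    simp only [Finset.mem_filter] at this
    exact lt_irrefl _ this.2

lemma nrank_lt_of_vidx_lt {u w w' : V} (hw : w ∈ G.neighborFinset u)
    (h : vidx w < vidx w') : nrank G u w < nrank G u w' := by
  apply Finset.card_lt_card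
  constructor
  · intro x hx
    simp only [Finset.mem_filter] at hx ⊢
    exact ⟨hx.1, lt_trans hx.2 h⟩
  · intro hsub
    have hwmem : w ∈ (G.neighborFinset u).filter fun x => vidx x < vidx w' := by
      simp only [Finset.mem_filter]; exact ⟨hw, h⟩
    have := hsub hwmem
    simp only [Finset.mem_filter] at this
    exact lt_irrefl _ this.2

lemma nrank_injOn {u w w' : V} (hw : w ∈ G.neighborFinset u) (hw' : w' ∈ G.neighborFinset u)
    (h : nrank G u w = nrank G u w') : w = w' := by
  rcases lt_trichotomy (vidx w) (vidx w') with hlt | heq | hgt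
  · exact absurd h (ne_of_lt (nrank_lt_of_vidx_lt G hw hlt))
  · exact vidx_injective heq
  · exact absurd h.symm (ne_of_lt (nrank_lt_of_vidx_lt G hw' hgt))

lemma walk_cross {S T : Finset V} (hTS : T ⊆ S) :
    ∀ {a b : (↑S : Set V)} (_ : (G.induce (↑S : Set V)).Walk a b),
      (a : V) ∈ T → (b : V) ∉ T → ∃ u ∈ T, ∃ x ∈ S, x ∉ T ∧ G.Adj u x := by
  intro a b w
  induction w with
  | nil => intro ha hb; exact absurd ha hb
  | @cons a c b h p ih =>
    intro ha hb
    by_cases hc : (c : V) ∈ T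
    · exact ih hc hb
    · refine ⟨a, ha, c, ?_, hc, ?_⟩
      · exact Finset.mem_coe.mp c.2
      · exact h

lemma exists_adj_of_connected {S : Finset V}
    (hconn : (G.induce (↑S : Set V)).Connected) {T : Finset V} (hTS : T ⊆ S)
    (hT : T.Nonempty) {x₀ : V} (hx₀ : x₀ ∈ S) (hx₀T : x₀ ∉ T) :
    ∃ u ∈ T, ∃ x ∈ S, x ∉ T ∧ G.Adj u x := by
  obtain ⟨a, ha⟩ := hT
  have haS : a ∈ S := hTS ha
  have := hconn.preconnected ⟨a, Finset.mem_coe.mpr haS⟩ ⟨x₀, Finset.mem_coe.mpr hx₀⟩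
  exact this.elim fun w => walk_cross G hTS w ha hx₀T

variable (S : Finset V) (r : V)

noncomputable def bfs : ℕ → List V
  | 0 => [r]
  | (t+1) =>
      let L := bfs t
      L ++ (if h : t < L.length then
              ssort (((G.neighborFinset (L.get ⟨t, h⟩)) ∩ S) \ L.toFinset) else [])

lemma bfs_zero : bfs G S r 0 = [r] := rfl

lemma bfs_succ (t : ℕ) : bfs G S r (t+1) = bfs G S r t ++
    (if h : t < (bfs G S r t).length then
      ssort (((G.neighborFinset ((bfs G S r t).get ⟨t, h⟩)) ∩ S) \ (bfs G S r t).toFinset)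
     else []) := rfl

lemma bfs_prefix_succ (t : ℕ) : bfs G S r t <+: bfs G S r (t+1) := by
  rw [bfs_succ]; exact List.prefix_append _ _

lemma bfs_prefix {t t' : ℕ} (h : t ≤ t') : bfs G S r t <+: bfs G S r t' := by
  induction t' with
  | zero => cases Nat.le_zero.mp h; exact List.prefix_refl _
  | succ n ih =>
    rcases Nat.lt_or_ge t (n+1) with h1 | h1
    · exact (ih (Nat.lt_succ_iff.mp h1)).trans (bfs_prefix_succ G S r n)
    · cases le_antisymm h h1; exact List.prefix_refl _

lemma bfs_length_mono {t t' : ℕ} (h : t ≤ t') :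
    (bfs G S r t).length ≤ (bfs G S r t').length :=
  (bfs_prefix G S r h).length_le

lemma bfs_length_pos (t : ℕ) : 0 < (bfs G S r t).length :=
  lt_of_lt_of_le (by simp [bfs_zero]) (bfs_length_mono G S r (Nat.zero_le t))

lemma bfs_stab {t : ℕ} (h : (bfs G S r t).length ≤ t) : bfs G S r (t+1) = bfs G S r t := by
  rw [bfs_succ, dif_neg (not_lt.mpr h), List.append_nil]

lemma bfs_nodup (t : ℕ) : (bfs G S r t).Nodup := by
  induction t with
  | zero => simp [bfs_zero]
  | succ n ih =>
    rw [bfs_succ]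
    by_cases h : n < (bfs G S r n).length
    · rw [dif_pos h]
      rw [List.nodup_append]
      refine ⟨ih, ssort_nodup _, ?_⟩
      intro a ha b hb hab
      have := mem_ssort.mp hb
      rw [Finset.mem_sdiff] at this
      exact this.2 (List.mem_toFinset.mpr (hab ▸ ha))
    · rw [dif_neg h, List.append_nil]; exact ih

lemma bfs_subset (hr : r ∈ S) (t : ℕ) : ∀ a ∈ bfs G S r t, a ∈ S := by
  induction t with
  | zero => intro a ha; rw [bfs_zero, List.mem_singleton] at ha; exact ha ▸ hr
  | succ n ih =>
    intro a ha
    rw [bfs_succ] at ha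
    rcases List.mem_append.mp ha with h | h
    · exact ih a h
    · by_cases hc : n < (bfs G S r n).length
      · rw [dif_pos hc] at h
        have := mem_ssort.mp h
        rw [Finset.mem_sdiff, Finset.mem_inter] at this
        exact this.1.2
      · rw [dif_neg hc] at h; simp at h

lemma bfs_length_le (hr : r ∈ S) (t : ℕ) : (bfs G S r t).length ≤ S.card := by
  rw [← List.toFinset_card_of_nodup (bfs_nodup G S r t)]
  apply Finset.card_le_card
  intro a ha
  exact bfs_subset G S r hr t a (List.mem_toFinset.mp ha)

lemma bfs_processed {t j : ℕ} (h : j < (bfs G S r t).length) : j < (bfs G S r j).length := by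
  induction t with
  | zero =>
    have hj : j = 0 := by
      rw [bfs_zero] at h; simp at h; exact h
    subst hj; exact bfs_length_pos G S r 0
  | succ n ih =>
    by_cases h1 : j < (bfs G S r n).length
    · exact ih h1
    · push_neg at h1
      by_cases h2 : (bfs G S r n).length ≤ n
      · rw [bfs_stab G S r h2] at h; exact absurd h (not_lt.mpr h1)
      · push_neg at h2
        have hnj : n < j := lt_of_lt_of_le h2 h1
        exact lt_of_lt_of_le h (bfs_length_mono G S r hnj)

lemma bfs_get_stable {t t' j : ℕ} (h : t ≤ t') (hj : j < (bfs G S r t).length) :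
    (bfs G S r t)[j]'hj = (bfs G S r t')[j]'(lt_of_lt_of_le hj (bfs_length_mono G S r h)) :=
  (bfs_prefix G S r h).getElem hj


noncomputable def blist : List V := bfs G S r (Fintype.card V)

lemma blist_def : blist G S r = bfs G S r (Fintype.card V) := rfl

lemma blist_length_le (hr : r ∈ S) : (blist G S r).length ≤ S.card :=
  bfs_length_le G S r hr _

lemma r_mem_blist : r ∈ blist G S r :=
  (bfs_prefix G S r (Nat.zero_le _)).subset (by rw [bfs_zero]; exact List.mem_singleton_self r)

lemma blist_toFinset (hr : r ∈ S) (hconn : (G.induce (↑S : Set V)).Connected) :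
    (blist G S r).toFinset = S := by
  apply Finset.Subset.antisymm
  · intro a ha
    exact bfs_subset G S r hr _ a (List.mem_toFinset.mp ha)
  · by_contra hne
    rw [Finset.subset_iff] at hne
    push_neg at hne
    obtain ⟨x₀, hx₀S, hx₀T⟩ := hne
    have hTS : (blist G S r).toFinset ⊆ S := by
      intro a ha; exact bfs_subset G S r hr _ a (List.mem_toFinset.mp ha)
    have hT : (blist G S r).toFinset.Nonempty := ⟨r, List.mem_toFinset.mpr (r_mem_blist G S r)⟩
    obtain ⟨u, huT, x, hxS, hxT, hadj⟩ :=
      exists_adj_of_connected G hconn hTS hT hx₀S hx₀T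
    obtain ⟨j, hj, hju⟩ := List.mem_iff_getElem.mp (List.mem_toFinset.mp huT)
    have hproc : j < (bfs G S r j).length := bfs_processed G S r hj
    have hjn : j + 1 ≤ Fintype.card V := by
      have h1 := blist_length_le G S r hr
      have h2 := Finset.card_le_univ S
      omega
    have hget : (bfs G S r j).get ⟨j, hproc⟩ = u := by
      rw [List.get_eq_getElem, bfs_get_stable G S r (by omega : j ≤ Fintype.card V) hproc]
      exact hju
    have hstep := bfs_succ G S r j
    rw [dif_pos hproc, hget] at hstep
    have hxbatch : x ∈ ssort ((G.neighborFinset u ∩ S) \ (bfs G S r j).toFinset) := by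
      rw [mem_ssort, Finset.mem_sdiff, Finset.mem_inter]
      refine ⟨⟨?_, hxS⟩, ?_⟩
      · rw [SimpleGraph.mem_neighborFinset]; exact hadj
      · intro hx
        apply hxT
        apply List.mem_toFinset.mpr
        exact (bfs_prefix G S r (by omega : j ≤ Fintype.card V)).subset (List.mem_toFinset.mp hx)
    apply hxT
    apply List.mem_toFinset.mpr
    apply (bfs_prefix G S r hjn).subset
    rw [hstep]
    exact List.mem_append.mpr (Or.inr hxbatch)

lemma blist_length (hr : r ∈ S) (hconn : (G.induce (↑S : Set V)).Connected) :
    (blist G S r).length = S.card := by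
  have h := blist_toFinset G S r hr hconn
  calc (blist G S r).length = (blist G S r).toFinset.card :=
        (List.toFinset_card_of_nodup (bfs_nodup G S r _)).symm
    _ = S.card := by rw [h]

lemma pstep_ex {i : ℕ} (hi : i < (blist G S r).length) :
    ∃ t, i < (bfs G S r (t+1)).length :=
  ⟨Fintype.card V, lt_of_lt_of_le hi (bfs_length_mono G S r (Nat.le_succ _))⟩

noncomputable def pstep (i : ℕ) : ℕ :=
  if h : i < (blist G S r).length then Nat.find (pstep_ex G S r h) else 0

lemma pstep_spec {i : ℕ} (hi : i < (blist G S r).length) :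
    i < (bfs G S r (pstep G S r i + 1)).length := by
  rw [pstep, dif_pos hi]; exact Nat.find_spec (pstep_ex G S r hi)

lemma pstep_le {i : ℕ} (h1 : 1 ≤ i) (hi : i < (blist G S r).length) :
    (bfs G S r (pstep G S r i)).length ≤ i := by
  rw [pstep, dif_pos hi]
  rcases Nat.eq_zero_or_pos (Nat.find (pstep_ex G S r hi)) with h0 | hpos
  · rw [h0, bfs_zero]; simpa using h1
  · obtain ⟨t, ht⟩ := Nat.exists_eq_succ_of_ne_zero (Nat.pos_iff_ne_zero.mp hpos)
    rw [ht]
    have := Nat.find_min (pstep_ex G S r hi) (show t < Nat.find (pstep_ex G S r hi) by omega)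
    exact not_lt.mp this

lemma pstep_proc {i : ℕ} (h1 : 1 ≤ i) (hi : i < (blist G S r).length) :
    pstep G S r i < (bfs G S r (pstep G S r i)).length := by
  by_contra h
  push_neg at h
  have hst := bfs_stab G S r h
  have h2 := pstep_spec G S r hi
  rw [hst] at h2
  exact absurd h2 (not_lt.mpr (pstep_le G S r h1 hi))

lemma pstep_lt {i : ℕ} (h1 : 1 ≤ i) (hi : i < (blist G S r).length) :
    pstep G S r i < i :=
  lt_of_lt_of_le (pstep_proc G S r h1 hi) (pstep_le G S r h1 hi)

lemma pstep_mono {i i' : ℕ} (hii' : i ≤ i') (hi : i < (blist G S r).length)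
    (hi' : i' < (blist G S r).length) : pstep G S r i ≤ pstep G S r i' := by
  rw [pstep, dif_pos hi, pstep, dif_pos hi']
  exact Nat.find_mono (fun t ht => lt_of_le_of_lt hii' ht)

noncomputable def bvert (i : ℕ) : V := (blist G S r).getD i r

lemma bvert_eq_getElem {i : ℕ} (hi : i < (blist G S r).length) :
    bvert G S r i = (blist G S r)[i]'hi := List.getD_eq_getElem _ _ hi

lemma bvert_zero : bvert G S r 0 = r := by
  have h0 : (0:ℕ) < (bfs G S r 0).length := by simp [bfs_zero]
  have hst := bfs_get_stable G S r (Nat.zero_le (Fintype.card V)) h0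
  have hr0 : (bfs G S r 0)[0]'h0 = r := by simp [bfs_zero]
  rw [bvert_eq_getElem G S r (bfs_length_pos G S r _)]
  exact hst.symm.trans hr0

lemma bvert_mem {i : ℕ} (hr : r ∈ S) (hi : i < (blist G S r).length) :
    bvert G S r i ∈ S := by
  rw [bvert_eq_getElem G S r hi]
  exact bfs_subset G S r hr _ _ (List.getElem_mem hi)

/-- key structural fact: position `i ≥ 1` of the BFS list lies in the sorted batch of its
parent step, at offset `i - (bfs (pstep i)).length`. -/
lemma bvert_spec {i : ℕ} (hr : r ∈ S) (h1 : 1 ≤ i) (hi : i < (blist G S r).length) :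
    i - (bfs G S r (pstep G S r i)).length <
      (ssort ((G.neighborFinset (bvert G S r (pstep G S r i)) ∩ S) \
        (bfs G S r (pstep G S r i)).toFinset)).length ∧
    bvert G S r i = (ssort ((G.neighborFinset (bvert G S r (pstep G S r i)) ∩ S) \
        (bfs G S r (pstep G S r i)).toFinset)).getD (i - (bfs G S r (pstep G S r i)).length) r := by
  have hproc := pstep_proc G S r h1 hi
  have hle := pstep_le G S r h1 hi
  have hspec := pstep_spec G S r hi
  have hplt : pstep G S r i < i := pstep_lt G S r h1 hi
  have hpn : pstep G S r i + 1 ≤ Fintype.card V := by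
    have h1' := blist_length_le G S r hr
    have h2 := Finset.card_le_univ S
    omega
  have hgetp : (bfs G S r (pstep G S r i)).get ⟨pstep G S r i, hproc⟩
      = bvert G S r (pstep G S r i) := by
    rw [List.get_eq_getElem, bfs_get_stable G S r (by omega : pstep G S r i ≤ Fintype.card V) hproc]
    exact (bvert_eq_getElem G S r (by
      rw [blist_def] at hi ⊢
      exact lt_of_lt_of_le hproc (bfs_length_mono G S r (by omega)))).symm
  have hstep := bfs_succ G S r (pstep G S r i)
  rw [dif_pos hproc, hgetp] at hstep
  have hlen : (bfs G S r (pstep G S r i + 1)).length = (bfs G S r (pstep G S r i)).length +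
      (ssort ((G.neighborFinset (bvert G S r (pstep G S r i)) ∩ S) \
        (bfs G S r (pstep G S r i)).toFinset)).length := by
    rw [hstep, List.length_append]
  have hoff : i - (bfs G S r (pstep G S r i)).length <
      (ssort ((G.neighborFinset (bvert G S r (pstep G S r i)) ∩ S) \
        (bfs G S r (pstep G S r i)).toFinset)).length := by omega
  refine ⟨hoff, ?_⟩
  have hstab := bfs_get_stable G S r hpn hspec
  have hx : (bfs G S r (pstep G S r i + 1))[i]'hspec =
      (ssort ((G.neighborFinset (bvert G S r (pstep G S r i)) ∩ S) \
        (bfs G S r (pstep G S r i)).toFinset))[i - (bfs G S r (pstep G S r i)).length]'hoff := by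
    rw [List.getElem_of_eq hstep]
    exact List.getElem_append_right hle
  rw [List.getD_eq_getElem _ _ hoff, bvert_eq_getElem G S r hi]
  exact hstab.symm.trans hx

lemma bvert_adj {i : ℕ} (hr : r ∈ S) (h1 : 1 ≤ i) (hi : i < (blist G S r).length) :
    bvert G S r i ∈ G.neighborFinset (bvert G S r (pstep G S r i)) := by
  obtain ⟨hj, hv⟩ := bvert_spec G S r hr h1 hi
  have : bvert G S r i ∈ ssort ((G.neighborFinset (bvert G S r (pstep G S r i)) ∩ S) \
      (bfs G S r (pstep G S r i)).toFinset) := by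
    rw [hv, List.getD_eq_getElem _ _ hj]; exact List.getElem_mem hj
  rw [mem_ssort, Finset.mem_sdiff, Finset.mem_inter] at this
  exact this.1.1

lemma bvert_vidx_lt {i i' : ℕ} (hr : r ∈ S) (h1 : 1 ≤ i) (hii' : i < i')
    (hi' : i' < (blist G S r).length) (hpp : pstep G S r i = pstep G S r i') :
    vidx (bvert G S r i) < vidx (bvert G S r i') := by
  have hi : i < (blist G S r).length := lt_trans hii' hi'
  obtain ⟨hj, hv⟩ := bvert_spec G S r hr h1 hi
  obtain ⟨hj', hv'⟩ := bvert_spec G S r hr (by omega) hi'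
  rw [← hpp] at hj' hv'
  have hle := pstep_le G S r h1 hi
  have hjj' : i - (bfs G S r (pstep G S r i)).length
      < i' - (bfs G S r (pstep G S r i)).length := by omega
  have hsorted := ssort_sorted ((G.neighborFinset (bvert G S r (pstep G S r i)) ∩ S) \
      (bfs G S r (pstep G S r i)).toFinset)
  rw [hv, hv', List.getD_eq_getElem _ _ hj, List.getD_eq_getElem _ _ hj']
  have hvle : vle ((ssort ((G.neighborFinset (bvert G S r (pstep G S r i)) ∩ S) \
        (bfs G S r (pstep G S r i)).toFinset))[i - (bfs G S r (pstep G S r i)).length]'hj)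
      ((ssort ((G.neighborFinset (bvert G S r (pstep G S r i)) ∩ S) \
        (bfs G S r (pstep G S r i)).toFinset))[i' - (bfs G S r (pstep G S r i)).length]'hj') :=
    hsorted.rel_get_of_lt (a := ⟨_, hj⟩) (b := ⟨_, hj'⟩) (Fin.mk_lt_mk.mpr hjj')
  rcases lt_or_eq_of_le hvle with h | h
  · exact h
  · exfalso
    have := (ssort_nodup _).getElem_inj_iff.mp (vidx_injective h)
    omega


noncomputable def ecode (i : ℕ) : ℕ :=
  nrank G (bvert G S r (pstep G S r i)) (bvert G S r i)

noncomputable def codeList : List (ℕ × ℕ) :=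
  (List.range' 1 ((blist G S r).length - 1)).map fun i => (pstep G S r i, ecode G S r i)

lemma codeList_length : (codeList G S r).length = (blist G S r).length - 1 := by
  rw [codeList, List.length_map, List.length_range']

lemma mem_range'_blist {i : ℕ} :
    i ∈ List.range' 1 ((blist G S r).length - 1) ↔ 1 ≤ i ∧ i < (blist G S r).length := by
  rw [List.mem_range'_1]
  have := bfs_length_pos G S r (Fintype.card V)
  rw [← blist_def] at this
  omega

def pkey (Δ : ℕ) (a : ℕ × ℕ) : ℕ := a.1 * Δ + a.2

variable (Δ : ℕ)

lemma ecode_lt (hdeg : ∀ v : V, G.degree v ≤ Δ) (hr : r ∈ S) {i : ℕ} (h1 : 1 ≤ i)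
    (hi : i < (blist G S r).length) : ecode G S r i < Δ := by
  have h := nrank_lt_card G (bvert_adj G S r hr h1 hi)
  rw [SimpleGraph.card_neighborFinset_eq_degree] at h
  exact lt_of_lt_of_le h (hdeg _)

lemma codeList_pairwise (hdeg : ∀ v : V, G.degree v ≤ Δ) (hr : r ∈ S) :
    (codeList G S r).Pairwise (fun a b => pkey Δ a < pkey Δ b) := by
  rw [codeList]
  rw [List.pairwise_map]
  apply List.Pairwise.imp_of_mem (S := fun a b => pkey Δ (pstep G S r a, ecode G S r a) <
      pkey Δ (pstep G S r b, ecode G S r b)) ?_ (List.pairwise_lt_range' (s := 1))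
  intro a b ha hb hab
  rw [mem_range'_blist] at ha hb
  have hpab : pstep G S r a ≤ pstep G S r b :=
    pstep_mono G S r (le_of_lt hab) ha.2 hb.2
  rcases lt_or_eq_of_le hpab with hlt | heq
  · have hea : ecode G S r a < Δ := ecode_lt G S r Δ hdeg hr ha.1 ha.2
    calc pkey Δ (pstep G S r a, ecode G S r a) = pstep G S r a * Δ + ecode G S r a := rfl
      _ < pstep G S r a * Δ + Δ := Nat.add_lt_add_left hea _
      _ = (pstep G S r a + 1) * Δ := by ring
      _ ≤ pstep G S r b * Δ := Nat.mul_le_mul_right _ (Nat.succ_le_of_lt hlt)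
      _ ≤ pstep G S r b * Δ + ecode G S r b := Nat.le_add_right _ _
  · have hvlt := bvert_vidx_lt G S r hr ha.1 hab hb.2 heq
    have hee : ecode G S r a < ecode G S r b := by
      rw [ecode, ecode, ← heq]
      exact nrank_lt_of_vidx_lt G (bvert_adj G S r hr ha.1 ha.2) hvlt
    simp only [pkey, heq]
    omega

lemma codeList_nodup (hdeg : ∀ v : V, G.degree v ≤ Δ) (hr : r ∈ S) :
    (codeList G S r).Nodup :=
  (codeList_pairwise G S r Δ hdeg hr).imp fun {a b} h => by
    intro he; rw [he] at h; exact lt_irrefl _ h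

noncomputable def codeF : Finset (ℕ × ℕ) := (codeList G S r).toFinset

lemma codeF_card (hdeg : ∀ v : V, G.degree v ≤ Δ) (hr : r ∈ S) :
    (codeF G S r).card = (blist G S r).length - 1 := by
  rw [codeF, List.toFinset_card_of_nodup (codeList_nodup G S r Δ hdeg hr), codeList_length]

lemma codeF_subset (hdeg : ∀ v : V, G.degree v ≤ Δ) (hr : r ∈ S) :
    codeF G S r ⊆ (Finset.range (blist G S r).length) ×ˢ (Finset.range Δ) := by
  intro a ha
  rw [codeF, List.mem_toFinset, codeList, List.mem_map] at ha
  obtain ⟨i, hi, rfl⟩ := ha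
  rw [mem_range'_blist] at hi
  rw [Finset.mem_product, Finset.mem_range, Finset.mem_range]
  exact ⟨lt_trans (pstep_lt G S r hi.1 hi.2) hi.2, ecode_lt G S r Δ hdeg hr hi.1 hi.2⟩

end BFS

section Recon
variable {V : Type} [Fintype V] [DecidableEq V] (G : SimpleGraph V)

lemma blist_eq_of_code_eq {S S' : Finset V} {r : V} (hr : r ∈ S) (hr' : r ∈ S')
    (hconn : (G.induce (↑S : Set V)).Connected) (hconn' : (G.induce (↑S' : Set V)).Connected)
    (hcard : S.card = S'.card) (hcode : codeList G S r = codeList G S' r) :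
    blist G S r = blist G S' r := by
  have hm : (blist G S r).length = (blist G S' r).length := by
    rw [blist_length G S r hr hconn, blist_length G S' r hr' hconn', hcard]
  have main : ∀ i, i < (blist G S r).length → bvert G S r i = bvert G S' r i := by
    intro i
    induction i using Nat.strong_induction_on with
    | _ i ih =>
      intro hi
      rcases Nat.eq_zero_or_pos i with rfl | hpos
      · rw [bvert_zero, bvert_zero]
      · have hmem : i ∈ List.range' 1 ((blist G S r).length - 1) :=
          (mem_range'_blist G S r).mpr ⟨hpos, hi⟩
        have hcode' : (List.range' 1 ((blist G S r).length - 1)).map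
            (fun i => (pstep G S r i, ecode G S r i)) =
            (List.range' 1 ((blist G S r).length - 1)).map
            (fun i => (pstep G S' r i, ecode G S' r i)) := by
          rw [codeList, codeList, ← hm] at hcode
          exact hcode
        have hpair := List.map_inj_left.mp hcode' i hmem
        have hps : pstep G S r i = pstep G S' r i := congrArg Prod.fst hpair
        have hec : ecode G S r i = ecode G S' r i := congrArg Prod.snd hpair
        have hplt : pstep G S r i < i := pstep_lt G S r hpos hi
        have hu : bvert G S r (pstep G S r i) = bvert G S' r (pstep G S r i) :=
          ih _ hplt (lt_trans hplt hi)
        have hw := bvert_adj G S r hr hpos hi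
        have hw' := bvert_adj G S' r hr' hpos (hm ▸ hi)
        rw [← hps, ← hu] at hw'
        apply nrank_injOn G hw hw'
        have h1 : nrank G (bvert G S r (pstep G S r i)) (bvert G S r i) = ecode G S r i := rfl
        have h2 : nrank G (bvert G S r (pstep G S r i)) (bvert G S' r i) = ecode G S' r i := by
          rw [ecode, ← hps, ← hu]
        rw [h1, h2, hec]
  apply List.ext_getElem hm
  intro n h1 h2
  have := main n h1
  rw [bvert_eq_getElem G S r h1, bvert_eq_getElem G S' r h2] at this
  exact this

lemma verts_eq_of_codeF_eq (Δ : ℕ) (hdeg : ∀ v : V, G.degree v ≤ Δ)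
    {S S' : Finset V} {r : V} (hr : r ∈ S) (hr' : r ∈ S')
    (hconn : (G.induce (↑S : Set V)).Connected) (hconn' : (G.induce (↑S' : Set V)).Connected)
    (hcard : S.card = S'.card) (hcodeF : codeF G S r = codeF G S' r) : S = S' := by
  letI : IsAntisymm (ℕ × ℕ) (fun a b => pkey Δ a < pkey Δ b) :=
    ⟨fun a b h h' => absurd h' (lt_asymm h)⟩
  have hlists : codeList G S r = codeList G S' r :=
    List.Perm.eq_of_pairwise'
      (codeList_pairwise G S r Δ hdeg hr) (codeList_pairwise G S' r Δ hdeg hr')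
      (List.perm_of_nodup_nodup_toFinset_eq (codeList_nodup G S r Δ hdeg hr)
        (codeList_nodup G S' r Δ hdeg hr') hcodeF)
  have hb := blist_eq_of_code_eq G hr hr' hconn hconn' hcard hlists
  rw [← blist_toFinset G S r hr hconn, ← blist_toFinset G S' r hr' hconn', hb]

end Recon

section Count
variable {V : Type} [Fintype V] [DecidableEq V] {G : SimpleGraph V} {q : ℕ} {g : V → Fin q}

def sencode {q : ℕ} (x y : Fin q) : ℕ := if y.val < x.val then y.val else y.val - 1

lemma sencode_lt {x y : Fin q} (h : y ≠ x) : sencode x y < q - 1 := by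
  have hx := x.isLt
  have hy := y.isLt
  have hne : y.val ≠ x.val := fun hv => h (Fin.ext hv)
  rw [sencode]
  split <;> omega

lemma sencode_inj {x y y' : Fin q} (h : y ≠ x) (h' : y' ≠ x)
    (he : sencode x y = sencode x y') : y = y' := by
  have hne : y.val ≠ x.val := fun hv => h (Fin.ext hv)
  have hne' : y'.val ≠ x.val := fun hv => h' (Fin.ext hv)
  rw [sencode, sencode] at he
  apply Fin.ext
  split at he <;> split at he <;> omega

lemma Polymer.eq_of {γ γ' : Polymer G q g} (hv : γ.verts = γ'.verts)
    (hs : γ.spin = γ'.spin) : γ = γ' := by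
  cases γ; cases γ'
  simp only at hv hs
  subst hv; subst hs
  rfl

noncomputable def proot (γ : Polymer G q g) : V := γ.nonempty.choose

lemma proot_mem (γ : Polymer G q g) : proot γ ∈ γ.verts := γ.nonempty.choose_spec

noncomputable def pcode (hq : 2 ≤ q) (m : ℕ) (γ : Polymer G q g) :
    V × Finset (ℕ × ℕ) × (Fin m → Fin (q-1)) :=
  (proot γ, codeF G γ.verts (proot γ),
   fun i => if h : sencode (g (bvert G γ.verts (proot γ) i))
        (γ.spin (bvert G γ.verts (proot γ) i)) < q - 1
      then ⟨_, h⟩ else ⟨0, by omega⟩)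

lemma count_le (Δ : ℕ) (hq : 2 ≤ q) (hdeg : ∀ v : V, G.degree v ≤ Δ)
    (C : Finset (Polymer G q g)) (m : ℕ) (hm : 1 ≤ m) :
    (C.filter fun γ => γ.size = m).card ≤
      Fintype.card V * ((m * Δ).choose (m-1)) * (q-1)^m := by
  have hcardT : (((Finset.univ : Finset V) ×ˢ
      (((Finset.range m) ×ˢ (Finset.range Δ)).powersetCard (m-1) ×ˢ
        (Finset.univ : Finset (Fin m → Fin (q-1)))))).card =
      Fintype.card V * ((m * Δ).choose (m-1)) * (q-1)^m := by
    rw [Finset.card_product, Finset.card_product, Finset.card_univ,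
      Finset.card_powersetCard, Finset.card_product, Finset.card_range, Finset.card_range,
      Finset.card_univ, Fintype.card_fun, Fintype.card_fin, Fintype.card_fin]
    ring
  rw [← hcardT]
  apply Finset.card_le_card_of_injOn (pcode hq m)
  · -- maps to
    intro γ hγ
    rw [Finset.mem_coe, Finset.mem_filter] at hγ
    obtain ⟨hγC, hγm⟩ := hγ
    have hr := proot_mem γ
    have hlen : (blist G γ.verts (proot γ)).length = m := by
      rw [blist_length G γ.verts (proot γ) hr γ.connected]
      exact hγm
    have hpc1 : (pcode hq m γ).2.1 = codeF G γ.verts (proot γ) := rfl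
    rw [Finset.mem_coe, Finset.mem_product]
    refine ⟨Finset.mem_univ _, ?_⟩
    rw [Finset.mem_product]
    refine ⟨?_, Finset.mem_univ _⟩
    rw [hpc1, Finset.mem_powersetCard]
    constructor
    · have := codeF_subset G γ.verts (proot γ) Δ hdeg hr
      rw [hlen] at this
      exact this
    · rw [codeF_card G γ.verts (proot γ) Δ hdeg hr, hlen]
  · -- injective
    intro γ hγ γ' hγ' hpc
    rw [Finset.coe_filter, Set.mem_setOf_eq] at hγ hγ'
    have e1 : proot γ = proot γ' := congrArg Prod.fst hpc
    have e2 : codeF G γ.verts (proot γ) = codeF G γ'.verts (proot γ') :=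
      congrArg (fun z => z.2.1) hpc
    have e3 : (fun (i : Fin m) => if h : sencode (g (bvert G γ.verts (proot γ) i))
          (γ.spin (bvert G γ.verts (proot γ) i)) < q - 1
        then (⟨_, h⟩ : Fin (q-1)) else ⟨0, by omega⟩) =
        (fun (i : Fin m) => if h : sencode (g (bvert G γ'.verts (proot γ') i))
          (γ'.spin (bvert G γ'.verts (proot γ') i)) < q - 1
        then (⟨_, h⟩ : Fin (q-1)) else ⟨0, by omega⟩) :=
      congrArg (fun z => z.2.2) hpc
    rw [← e1] at e2 e3
    have hr := proot_mem γ
    have hr' : proot γ ∈ γ'.verts := e1 ▸ proot_mem γ'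
    have hcard : γ.verts.card = γ'.verts.card := hγ.2.trans hγ'.2.symm
    have hS : γ.verts = γ'.verts :=
      verts_eq_of_codeF_eq G Δ hdeg hr hr' γ.connected γ'.connected hcard e2
    rw [← hS] at e3
    have hlen : (blist G γ.verts (proot γ)).length = m := by
      rw [blist_length G γ.verts (proot γ) hr γ.connected]
      exact hγ.2
    apply Polymer.eq_of hS
    funext v
    by_cases hv : v ∈ γ.verts
    · have hvb : v ∈ blist G γ.verts (proot γ) :=
        List.mem_toFinset.mp ((blist_toFinset G γ.verts (proot γ) hr γ.connected).symm ▸ hv)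
      obtain ⟨i, hi, hiv⟩ := List.mem_iff_getElem.mp hvb
      have hbv : bvert G γ.verts (proot γ) i = v := by
        rw [bvert_eq_getElem G γ.verts (proot γ) hi]; exact hiv
      have him : i < m := hlen ▸ hi
      have happ := congrFun e3 ⟨i, him⟩
      have hne1 : γ.spin v ≠ g v := γ.spin_ne v hv
      have hne2 : γ'.spin v ≠ g v := γ'.spin_ne v (hS ▸ hv)
      simp only [hbv] at happ
      rw [dif_pos (sencode_lt hne1), dif_pos (sencode_lt hne2)] at happ
      have := congrArg Fin.val happ
      simp only at this
      exact sencode_inj hne1 hne2 this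
    · rw [γ.spin_ground v hv, γ'.spin_ground v (hS ▸ hv)]
end Count

section Analytic
open Real

lemma geom_bound {x : ℝ} (h0 : 0 ≤ x) (h1 : x ≤ 2/3) (N : ℕ) :
    ∑ i ∈ Finset.range N, x ^ i ≤ 3 := by
  have hlt : x < 1 := lt_of_le_of_lt h1 (by norm_num)
  have hne : x ≠ 1 := ne_of_lt hlt
  rw [geom_sum_eq hne]
  rw [div_le_iff_of_neg (by linarith : x - 1 < 0)]
  nlinarith [pow_nonneg h0 N]

lemma sum_pow_from_one {x : ℝ} (h0 : 0 ≤ x) (h1 : x ≤ 2/3) (N : ℕ) :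
    ∑ m ∈ Finset.range N, (if m = 0 then (0:ℝ) else x ^ m) ≤ 2 := by
  cases N with
  | zero => simp
  | succ K =>
    rw [Finset.sum_range_succ']
    have hf : ∀ i ∈ Finset.range K, (if i+1 = 0 then (0:ℝ) else x^(i+1)) = x^i * x :=
      fun i _ => by rw [if_neg (Nat.succ_ne_zero i), pow_succ]
    rw [Finset.sum_congr rfl hf, if_pos rfl, add_zero, ← Finset.sum_mul]
    have hg := geom_bound h0 h1 K
    calc (∑ i ∈ Finset.range K, x ^ i) * x ≤ 3 * x :=
          mul_le_mul_of_nonneg_right hg h0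
      _ ≤ 2 := by linarith

lemma exp23_le : Real.exp (-(2/3)) ≤ 2/3 := by
  have h32 : (3:ℝ)/2 ≤ Real.exp (2/3) := by nlinarith [Real.add_one_le_exp (2/3 : ℝ)]
  rw [Real.exp_neg]
  calc (Real.exp (2/3))⁻¹ ≤ ((3:ℝ)/2)⁻¹ := inv_anti₀ (by norm_num) h32
    _ = 2/3 := by norm_num

lemma choose_le_epow (Δ m : ℕ) (hm : 1 ≤ m) (hΔ : 3 ≤ Δ) :
    (((m * Δ).choose (m-1) : ℝ)) ≤ (Real.exp 1 * Δ) ^ m := by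
  have h1 : (m * Δ).choose (m-1) ≤ (m * Δ).choose m := by
    have he : m - 1 + 1 = m := by omega
    have hhalf : m - 1 < (m*Δ)/2 := by
      have h2m : m * 2 ≤ m * Δ := Nat.mul_le_mul_left m (by omega)
      have := (Nat.le_div_iff_mul_le (by norm_num : 0 < 2)).mpr h2m
      omega
    have := Nat.choose_le_succ_of_lt_half_left hhalf
    rwa [he] at this
  have h2 : ((m*Δ).choose m : ℝ) ≤ ((m*Δ : ℕ) : ℝ)^m / (m.factorial) :=
    Nat.choose_le_pow_div m (m*Δ)
  have h3 : ((m:ℝ))^m / m.factorial ≤ Real.exp m := by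
    have hs := Real.sum_le_exp_of_nonneg (x := (m:ℝ)) (Nat.cast_nonneg m) (m+1)
    have hterm : ((m:ℝ))^m / m.factorial ≤
        ∑ i ∈ Finset.range (m+1), (m:ℝ)^i / i.factorial :=
      Finset.single_le_sum (f := fun i => (m:ℝ)^i / i.factorial)
        (fun i _ => by positivity) (Finset.self_mem_range_succ m)
    exact le_trans hterm hs
  have hfac : (0:ℝ) < m.factorial := by positivity
  have hexpm : Real.exp (m:ℝ) = Real.exp 1 ^ m := by
    rw [← Real.exp_nat_mul, mul_one]
  calc (((m * Δ).choose (m-1) : ℝ)) ≤ ((m*Δ).choose m : ℝ) := by exact_mod_cast h1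
    _ ≤ ((m*Δ : ℕ) : ℝ)^m / (m.factorial) := h2
    _ = (Δ:ℝ)^m * (((m:ℝ))^m / m.factorial) := by
        push_cast
        rw [mul_pow]
        ring
    _ ≤ (Δ:ℝ)^m * Real.exp m := by
        apply mul_le_mul_of_nonneg_left h3 (by positivity)
    _ = (Real.exp 1 * Δ) ^ m := by rw [hexpm, mul_pow]; ring

lemma per_m_bound (q Δ : ℕ) (hq : 2 ≤ q) (hΔ : 3 ≤ Δ) (τ : ℝ)
    (hτ : 5 + 3*Real.log (((q:ℝ)-1)*Δ) ≤ τ) (m : ℕ) (hm : 1 ≤ m) :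
    ((m * Δ).choose (m-1) : ℝ) * (((q:ℝ)-1))^m * Real.exp (-(τ*m)/3) ≤
      Real.exp (-(2/3)) ^ m := by
  have hq1 : (1:ℝ) ≤ (q:ℝ) - 1 := by
    have : (2:ℝ) ≤ (q:ℝ) := by exact_mod_cast hq
    linarith
  have hΔ1 : (3:ℝ) ≤ (Δ:ℝ) := by exact_mod_cast hΔ
  have hA : (0:ℝ) < ((q:ℝ)-1) * Δ := by nlinarith
  have hexp : Real.exp (-τ/3) ≤ Real.exp (-(5:ℝ)/3) / (((q:ℝ)-1) * Δ) := by
    have heq : Real.exp (-(5:ℝ)/3) / (((q:ℝ)-1)*Δ) =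
        Real.exp (-(5:ℝ)/3 - Real.log (((q:ℝ)-1)*Δ)) := by
      rw [Real.exp_sub, Real.exp_log hA]
    rw [heq]
    exact Real.exp_le_exp.mpr (by linarith)
  have hpow : Real.exp (-(τ*m)/3) = Real.exp (-τ/3) ^ m := by
    rw [← Real.exp_nat_mul]
    congr 1
    ring
  have h1exp : Real.exp 1 * Real.exp (-(5:ℝ)/3) = Real.exp (-(2/3)) := by
    rw [← Real.exp_add]
    norm_num
  calc ((m * Δ).choose (m-1) : ℝ) * (((q:ℝ)-1))^m * Real.exp (-(τ*m)/3)
      ≤ (Real.exp 1 * Δ)^m * (((q:ℝ)-1))^m * (Real.exp (-(5:ℝ)/3) / (((q:ℝ)-1)*Δ))^m := by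
        rw [hpow]
        have hc := choose_le_epow Δ m hm hΔ
        apply mul_le_mul
        · exact mul_le_mul_of_nonneg_right hc (by positivity)
        · exact pow_le_pow_left₀ (le_of_lt (Real.exp_pos _)) hexp m
        · positivity
        · positivity
    _ = (Real.exp 1 * Δ * (((q:ℝ)-1)) * (Real.exp (-(5:ℝ)/3) / (((q:ℝ)-1)*Δ)))^m := by
        rw [← mul_pow, ← mul_pow]
    _ = Real.exp (-(2/3)) ^ m := by
        congr 1
        calc Real.exp 1 * ↑Δ * (((q:ℝ)-1)) * (Real.exp (-(5:ℝ)/3)/(((q:ℝ)-1)*Δ))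
            = (Real.exp 1 * Real.exp (-(5:ℝ)/3)) * ((((q:ℝ)-1)*Δ) / (((q:ℝ)-1)*Δ)) := by
              ring
          _ = Real.exp (-(2/3)) := by rw [div_self (ne_of_gt hA), mul_one, h1exp]

end Analytic

section ZAux
variable {V : Type} [Fintype V] [DecidableEq V] {G : SimpleGraph V} {q : ℕ} {g : V → Fin q}
variable (C : Finset (Polymer G q g)) (w : Polymer G q g → ℝ)

lemma omega_subset {Γ : Finset (Polymer G q g)} (h : Γ ∈ polymerOmega C) : Γ ⊆ C :=
  Finset.mem_powerset.mp (Finset.mem_filter.mp h).1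

lemma omega_down {Γ Γ' : Finset (Polymer G q g)} (h : Γ ∈ polymerOmega C) (hsub : Γ' ⊆ Γ) :
    Γ' ∈ polymerOmega C := by
  rw [polymerOmega, Finset.mem_filter] at h ⊢
  exact ⟨Finset.mem_powerset.mpr (hsub.trans (Finset.mem_powerset.mp h.1)),
    fun γ hγ γ' hγ' => h.2 γ (hsub hγ) γ' (hsub hγ')⟩

lemma empty_mem_omega : (∅ : Finset (Polymer G q g)) ∈ polymerOmega C := by
  rw [polymerOmega, Finset.mem_filter]
  exact ⟨Finset.mem_powerset.mpr (Finset.empty_subset _), fun γ hγ => absurd hγ (Finset.notMem_empty _)⟩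

lemma empty_mem_trunc (k : ℝ) : (∅ : Finset (Polymer G q g)) ∈ polymerOmegaTrunc C k := by
  rw [polymerOmegaTrunc, Finset.mem_filter]
  exact ⟨empty_mem_omega C, fun γ hγ => absurd hγ (Finset.notMem_empty _)⟩

lemma configWeight_nonneg (hw : ∀ γ ∈ C, 0 ≤ w γ) {Γ : Finset (Polymer G q g)} (h : Γ ⊆ C) :
    0 ≤ configWeight w Γ :=
  Finset.prod_nonneg fun γ hγ => hw γ (h hγ)

lemma Zk_ge_one (hw : ∀ γ ∈ C, 0 ≤ w γ) (k : ℝ) : 1 ≤ polymerZtrunc C w k := by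
  have h0 : configWeight w (∅ : Finset (Polymer G q g)) = 1 := Finset.prod_empty
  rw [polymerZtrunc]
  have := Finset.single_le_sum (f := configWeight w)
    (fun Γ hΓ => configWeight_nonneg C w hw
      (omega_subset C (Finset.mem_filter.mp hΓ).1)) (empty_mem_trunc C k)
  rw [h0] at this
  exact this

lemma Zk_le_Z (hw : ∀ γ ∈ C, 0 ≤ w γ) (k : ℝ) : polymerZtrunc C w k ≤ polymerZ C w :=
  Finset.sum_le_sum_of_subset_of_nonneg (Finset.filter_subset _ _)
    (fun Γ hΓ _ => configWeight_nonneg C w hw (omega_subset C hΓ))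

lemma Z_le_Zk_mul (hw : ∀ γ ∈ C, 0 ≤ w γ) (k : ℝ) :
    polymerZ C w ≤ polymerZtrunc C w k *
      ∏ γ ∈ C.filter (fun γ => ¬((γ.size : ℝ) ≤ k)), (w γ + 1) := by
  classical
  set p : Polymer G q g → Prop := fun γ => (γ.size : ℝ) ≤ k with hp
  set L := C.filter (fun γ => ¬ p γ) with hL
  set i : Finset (Polymer G q g) → Finset (Polymer G q g) × Finset (Polymer G q g) :=
    fun Γ => (Γ.filter p, Γ.filter (fun γ => ¬ p γ)) with hi
  have hinj : ∀ Γ ∈ polymerOmega C, ∀ Γ' ∈ polymerOmega C, i Γ = i Γ' → Γ = Γ' := by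
    intro Γ _ Γ' _ h
    have h1 : Γ.filter p = Γ'.filter p := congrArg Prod.fst h
    have h2 : Γ.filter (fun γ => ¬ p γ) = Γ'.filter (fun γ => ¬ p γ) := congrArg Prod.snd h
    rw [← Finset.filter_union_filter_not_eq p Γ, ← Finset.filter_union_filter_not_eq p Γ', h1, h2]
  calc polymerZ C w
      = ∑ Γ ∈ polymerOmega C,
          (configWeight w (Γ.filter p) * configWeight w (Γ.filter (fun γ => ¬ p γ))) := by
        apply Finset.sum_congr rfl
        intro Γ _
        exact (Finset.prod_filter_mul_prod_filter_not Γ p w).symm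
    _ = ∑ P ∈ (polymerOmega C).image i, configWeight w P.1 * configWeight w P.2 :=
        (Finset.sum_image (f := fun P => configWeight w P.1 * configWeight w P.2) hinj).symm
    _ ≤ ∑ P ∈ (polymerOmegaTrunc C k) ×ˢ L.powerset,
          configWeight w P.1 * configWeight w P.2 := by
        apply Finset.sum_le_sum_of_subset_of_nonneg
        · intro P hP
          rw [Finset.mem_image] at hP
          obtain ⟨Γ, hΓ, rfl⟩ := hP
          rw [Finset.mem_product]
          constructor
          · rw [polymerOmegaTrunc, Finset.mem_filter]
            refine ⟨omega_down C hΓ (Finset.filter_subset _ _), ?_⟩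
            intro γ hγ
            exact (Finset.mem_filter.mp hγ).2
          · rw [Finset.mem_powerset]
            intro γ hγ
            rw [Finset.mem_filter] at hγ
            rw [hL, Finset.mem_filter]
            exact ⟨omega_subset C hΓ hγ.1, hγ.2⟩
        · intro P hP _
          rw [Finset.mem_product] at hP
          apply mul_nonneg
          · exact configWeight_nonneg C w hw
              (omega_subset C (Finset.mem_filter.mp hP.1).1)
          · apply configWeight_nonneg C w hw
            intro γ hγ
            have := Finset.mem_powerset.mp hP.2 hγ
            rw [hL, Finset.mem_filter] at this
            exact this.1
    _ = polymerZtrunc C w k * ∑ B ∈ L.powerset, configWeight w B := by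
        rw [Finset.sum_product, polymerZtrunc, Finset.sum_mul_sum]
    _ = polymerZtrunc C w k * ∏ γ ∈ L, (w γ + 1) := by
        congr 1
        rw [Finset.prod_add]
        apply Finset.sum_congr rfl
        intro t ht
        rw [Finset.prod_const_one, mul_one]
        rfl

lemma prod_add_one_le_exp (hw : ∀ γ ∈ C, 0 ≤ w γ) (L : Finset (Polymer G q g)) (hLC : L ⊆ C) :
    ∏ γ ∈ L, (w γ + 1) ≤ Real.exp (∑ γ ∈ L, w γ) := by
  rw [Real.exp_sum]
  apply Finset.prod_le_prod
  · intro γ hγ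
    have := hw γ (hLC hγ)
    linarith
  · intro γ hγ
    exact Real.add_one_le_exp (w γ)

end ZAux

section Tail
variable {V : Type} [Fintype V] [DecidableEq V] {G : SimpleGraph V} {q : ℕ} {g : V → Fin q}

lemma size_pos (γ : Polymer G q g) : 1 ≤ γ.size := Finset.card_pos.mpr γ.nonempty

lemma size_le_n (γ : Polymer G q g) : γ.size ≤ Fintype.card V := by
  rw [Polymer.size, ← Finset.card_univ]
  exact Finset.card_le_univ _

lemma tail_sum_le (Δ : ℕ) (hq : 2 ≤ q) (hΔ : 3 ≤ Δ) (hdeg : ∀ v : V, G.degree v ≤ Δ)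
    (C : Finset (Polymer G q g)) (w : Polymer G q g → ℝ)
    (τ : ℝ) (hτ : 5 + 3 * Real.log (((q : ℝ) - 1) * Δ) ≤ τ)
    (hsamp : ∀ γ ∈ C, w γ ≤ Real.exp (-τ * γ.size))
    (hn : 0 < Fintype.card V) (ε : ℝ) (hε : 0 < ε) (k : ℝ)
    (hk : k = 3 * Real.log (2 * (Fintype.card V : ℝ) / ε) / (2 * τ)) :
    ∑ γ ∈ C.filter (fun γ => ¬((γ.size : ℝ) ≤ k)), w γ ≤ ε := by
  have hq1 : (1:ℝ) ≤ (q:ℝ) - 1 := by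
    have : (2:ℝ) ≤ (q:ℝ) := by exact_mod_cast hq
    linarith
  have hΔ1 : (3:ℝ) ≤ (Δ:ℝ) := by exact_mod_cast hΔ
  have hA1 : (1:ℝ) ≤ ((q:ℝ) - 1) * Δ := by nlinarith
  have hτpos : 0 < τ := by
    have := Real.log_nonneg hA1
    linarith
  have hnR : (0:ℝ) < (Fintype.card V : ℝ) := by exact_mod_cast hn
  set nR : ℝ := (Fintype.card V : ℝ) with hnRdef
  set L := C.filter (fun γ => ¬((γ.size : ℝ) ≤ k)) with hLdef
  -- pointwise bound
  have hpt : ∀ γ ∈ L, w γ ≤ (ε / (2 * nR)) * Real.exp (-(τ * (γ.size:ℝ))/3) := by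
    intro γ hγ
    rw [hLdef, Finset.mem_filter] at hγ
    obtain ⟨hγC, hks⟩ := hγ
    have hks' : k < (γ.size : ℝ) := not_le.mp hks
    have h1 := hsamp γ hγC
    have hsplit : Real.exp (-τ * (γ.size:ℝ)) =
        Real.exp (-(2*τ*(γ.size:ℝ))/3) * Real.exp (-(τ*(γ.size:ℝ))/3) := by
      rw [← Real.exp_add]
      congr 1
      ring
    have hfrac : Real.exp (-(2*τ*(γ.size:ℝ))/3) ≤ ε / (2 * nR) := by
      have hpos : (0:ℝ) < ε / (2 * nR) := by positivity
      rw [← Real.exp_log hpos]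
      apply Real.exp_le_exp.mpr
      have hlogeq : Real.log (ε / (2 * nR)) = - Real.log (2 * nR / ε) := by
        rw [← Real.log_inv, inv_div]
      rw [hlogeq]
      have hkτ : Real.log (2 * nR / ε) = 2 * τ * k / 3 := by
        rw [hk]
        field_simp
      rw [hkτ]
      nlinarith
    calc w γ ≤ Real.exp (-τ * (γ.size:ℝ)) := h1
      _ = Real.exp (-(2*τ*(γ.size:ℝ))/3) * Real.exp (-(τ*(γ.size:ℝ))/3) := hsplit
      _ ≤ (ε / (2 * nR)) * Real.exp (-(τ*(γ.size:ℝ))/3) :=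
          mul_le_mul_of_nonneg_right hfrac (le_of_lt (Real.exp_pos _))
  -- fiberwise bound
  have hmaps : ∀ γ ∈ L, γ.size ∈ Finset.range (Fintype.card V + 1) := fun γ _ =>
    Finset.mem_range.mpr (Nat.lt_succ_of_le (size_le_n γ))
  have hfib := Finset.sum_fiberwise_of_maps_to hmaps (fun γ => Real.exp (-(τ * (γ.size:ℝ))/3))
  have hB : ∑ γ ∈ L, Real.exp (-(τ * (γ.size:ℝ))/3) ≤ nR * 2 := by
    rw [← hfib]
    have hinner : ∀ m ∈ Finset.range (Fintype.card V + 1),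
        ∑ γ ∈ L.filter (fun γ => γ.size = m), Real.exp (-(τ * (γ.size:ℝ))/3) ≤
          nR * (if m = 0 then (0:ℝ) else Real.exp (-(2/3)) ^ m) := by
      intro m _
      have hconst : ∑ γ ∈ L.filter (fun γ => γ.size = m), Real.exp (-(τ * (γ.size:ℝ))/3) =
          ((L.filter (fun γ => γ.size = m)).card : ℝ) * Real.exp (-(τ * (m:ℝ))/3) := by
        rw [Finset.sum_congr rfl (fun γ hγ => by
          rw [(Finset.mem_filter.mp hγ).2])]
        rw [Finset.sum_const, nsmul_eq_mul]
      rw [hconst]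
      rcases Nat.eq_zero_or_pos m with rfl | hm
      · have hempty : L.filter (fun γ => γ.size = 0) = ∅ := by
          apply Finset.filter_eq_empty_iff.mpr
          intro γ _
          have := size_pos γ
          omega
        rw [hempty]
        simp
      · rw [if_neg (by omega)]
        have hsub : L.filter (fun γ => γ.size = m) ⊆ C.filter (fun γ => γ.size = m) := by
          intro γ hγ
          rw [Finset.mem_filter] at hγ ⊢
          exact ⟨(Finset.mem_filter.mp hγ.1).1, hγ.2⟩
        have hcount := count_le Δ hq hdeg C m hm
        have hcard : ((L.filter (fun γ => γ.size = m)).card : ℝ) ≤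
            nR * ((m * Δ).choose (m-1) : ℝ) * (((q:ℝ)-1))^m := by
          have h1 : (L.filter (fun γ => γ.size = m)).card ≤
              Fintype.card V * ((m * Δ).choose (m-1)) * (q-1)^m :=
            le_trans (Finset.card_le_card hsub) hcount
          have h2 : (((q-1 : ℕ)):ℝ) = (q:ℝ) - 1 := by
            rw [Nat.cast_sub (by omega), Nat.cast_one]
          calc ((L.filter (fun γ => γ.size = m)).card : ℝ) ≤
              ((Fintype.card V * ((m * Δ).choose (m-1)) * (q-1)^m : ℕ) : ℝ) := by
                exact_mod_cast h1
            _ = nR * ((m * Δ).choose (m-1) : ℝ) * (((q:ℝ)-1))^m := by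
                push_cast [h2]
                ring
        have hperm := per_m_bound q Δ hq hΔ τ hτ m hm
        calc ((L.filter (fun γ => γ.size = m)).card : ℝ) * Real.exp (-(τ * (m:ℝ))/3)
            ≤ (nR * ((m * Δ).choose (m-1) : ℝ) * (((q:ℝ)-1))^m) * Real.exp (-(τ * (m:ℝ))/3) :=
              mul_le_mul_of_nonneg_right hcard (le_of_lt (Real.exp_pos _))
          _ = nR * (((m * Δ).choose (m-1) : ℝ) * (((q:ℝ)-1))^m * Real.exp (-(τ * (m:ℝ))/3)) := by
              ring
          _ ≤ nR * (Real.exp (-(2/3)) ^ m) := by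
              apply mul_le_mul_of_nonneg_left _ (le_of_lt hnR)
              have h := per_m_bound q Δ hq hΔ τ hτ m hm
              convert h using 3
    calc ∑ m ∈ Finset.range (Fintype.card V + 1),
          ∑ γ ∈ L.filter (fun γ => γ.size = m), Real.exp (-(τ * (γ.size:ℝ))/3)
        ≤ ∑ m ∈ Finset.range (Fintype.card V + 1),
            nR * (if m = 0 then (0:ℝ) else Real.exp (-(2/3)) ^ m) :=
          Finset.sum_le_sum hinner
      _ = nR * ∑ m ∈ Finset.range (Fintype.card V + 1),
            (if m = 0 then (0:ℝ) else Real.exp (-(2/3)) ^ m) := by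
          rw [Finset.mul_sum]
      _ ≤ nR * 2 := by
          apply mul_le_mul_of_nonneg_left _ (le_of_lt hnR)
          exact sum_pow_from_one (le_of_lt (Real.exp_pos _)) exp23_le _
  -- combine
  calc ∑ γ ∈ L, w γ ≤ ∑ γ ∈ L, (ε / (2 * nR)) * Real.exp (-(τ * (γ.size:ℝ))/3) :=
        Finset.sum_le_sum hpt
    _ = (ε / (2 * nR)) * ∑ γ ∈ L, Real.exp (-(τ * (γ.size:ℝ))/3) := by
        rw [Finset.mul_sum]
    _ ≤ (ε / (2 * nR)) * (nR * 2) := by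
        apply mul_le_mul_of_nonneg_left hB (by positivity)
    _ = ε := by
        have h2nR : (2:ℝ) * nR ≠ 0 := by positivity
        calc ε / (2 * nR) * (nR * 2) = ε * ((2 * nR) / (2 * nR)) := by ring
          _ = ε := by rw [div_self h2nR, mul_one]

end Tail

/-- under the polymer sampling condition with constant
`τ ≥ 5 + 3 log((q-1)Δ)`, for `k = 3 log(2n/ε)/(2τ)` the truncated partition function
satisfies `Z_k(G) ≤ Z(G) ≤ e^ε Z_k(G)` and the total variation distance between the Gibbs
measures `μ_G` and `μ_{G,k}` is at most `ε`. -/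
theorem stmt_12 {V : Type} [Fintype V] [DecidableEq V] (G : SimpleGraph V) (q Δ : ℕ)
    (hq : 2 ≤ q) (hΔ : 3 ≤ Δ) (hdeg : ∀ v : V, G.degree v ≤ Δ)
    (g : V → Fin q) (C : Finset (Polymer G q g)) (w : Polymer G q g → ℝ)
    (hw : ∀ γ ∈ C, 0 ≤ w γ) (τ : ℝ)
    (hτ : 5 + 3 * Real.log (((q : ℝ) - 1) * Δ) ≤ τ)
    (hsamp : ∀ γ ∈ C, w γ ≤ Real.exp (-τ * γ.size))
    (hn : 0 < Fintype.card V) (ε : ℝ) (hε : 0 < ε) (k : ℝ)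
    (hk : k = 3 * Real.log (2 * (Fintype.card V : ℝ) / ε) / (2 * τ)) :
    polymerZtrunc C w k ≤ polymerZ C w
    ∧ polymerZ C w ≤ Real.exp ε * polymerZtrunc C w k
    ∧ (1 / 2) * ∑ Γ ∈ polymerOmega C, |polymerMu C w Γ - polymerMuTrunc C w k Γ| ≤ ε := by
  have htail := tail_sum_le Δ hq hΔ hdeg C w τ hτ hsamp hn ε hε k hk
  have hZk1 := Zk_ge_one C w hw k
  have hZkZ := Zk_le_Z C w hw k
  have hZkpos : (0:ℝ) < polymerZtrunc C w k := lt_of_lt_of_le one_pos hZk1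
  have hZpos : (0:ℝ) < polymerZ C w := lt_of_lt_of_le hZkpos hZkZ
  have h2 : polymerZ C w ≤ Real.exp ε * polymerZtrunc C w k := by
    have ha := Z_le_Zk_mul C w hw k
    have hb := prod_add_one_le_exp C w hw (C.filter (fun γ => ¬((γ.size:ℝ) ≤ k)))
      (Finset.filter_subset _ _)
    have hc := Real.exp_le_exp.mpr htail
    calc polymerZ C w
        ≤ polymerZtrunc C w k * ∏ γ ∈ C.filter (fun γ => ¬((γ.size:ℝ) ≤ k)), (w γ + 1) := ha
      _ ≤ polymerZtrunc C w k * Real.exp ε :=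
          mul_le_mul_of_nonneg_left (hb.trans hc) (le_of_lt hZkpos)
      _ = Real.exp ε * polymerZtrunc C w k := mul_comm _ _
  refine ⟨hZkZ, h2, ?_⟩
  have hsub : polymerOmegaTrunc C k ⊆ polymerOmega C := by
    intro Γ hΓ
    rw [polymerOmegaTrunc, Finset.mem_filter] at hΓ
    exact hΓ.1
  have hsdiff := Finset.sum_sdiff
    (f := fun Γ => |polymerMu C w Γ - polymerMuTrunc C w k Γ|) hsub
  have hsdiffw := Finset.sum_sdiff (f := configWeight w) hsub
  have he1 : ∑ Γ ∈ polymerOmegaTrunc C k, configWeight w Γ = polymerZtrunc C w k := rfl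
  have he2 : ∑ Γ ∈ polymerOmega C, configWeight w Γ = polymerZ C w := rfl
  have hpart1 : ∑ Γ ∈ polymerOmegaTrunc C k, |polymerMu C w Γ - polymerMuTrunc C w k Γ|
      = polymerZtrunc C w k / polymerZtrunc C w k - polymerZtrunc C w k / polymerZ C w := by
    have hper : ∀ Γ ∈ polymerOmegaTrunc C k, |polymerMu C w Γ - polymerMuTrunc C w k Γ| =
        configWeight w Γ / polymerZtrunc C w k - configWeight w Γ / polymerZ C w := by
      intro Γ hΓ
      have hΓΩ : Γ ∈ polymerOmega C := hsub hΓ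
      have hcw : 0 ≤ configWeight w Γ := configWeight_nonneg C w hw (omega_subset C hΓΩ)
      have hmono : configWeight w Γ / polymerZ C w ≤ configWeight w Γ / polymerZtrunc C w k := by
        gcongr
      rw [polymerMu, polymerMuTrunc, if_pos hΓ, abs_of_nonpos (by linarith)]
      ring
    rw [Finset.sum_congr rfl hper, Finset.sum_sub_distrib, ← Finset.sum_div, ← Finset.sum_div, he1]
  have hpart2 : ∑ Γ ∈ polymerOmega C \ polymerOmegaTrunc C k,
      |polymerMu C w Γ - polymerMuTrunc C w k Γ|
      = (polymerZ C w - polymerZtrunc C w k) / polymerZ C w := by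
    have hper : ∀ Γ ∈ polymerOmega C \ polymerOmegaTrunc C k,
        |polymerMu C w Γ - polymerMuTrunc C w k Γ| = configWeight w Γ / polymerZ C w := by
      intro Γ hΓ
      rw [Finset.mem_sdiff] at hΓ
      have hcw : 0 ≤ configWeight w Γ := configWeight_nonneg C w hw (omega_subset C hΓ.1)
      rw [polymerMu, polymerMuTrunc, if_neg hΓ.2, sub_zero,
        abs_of_nonneg (div_nonneg hcw (le_of_lt hZpos))]
    rw [Finset.sum_congr rfl hper, ← Finset.sum_div]
    congr 1
    have := hsdiffw
    rw [he1, he2] at this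
    linarith
  have key : Real.exp (-ε) ≤ polymerZtrunc C w k / polymerZ C w := by
    rw [le_div_iff₀ hZpos]
    calc Real.exp (-ε) * polymerZ C w
        ≤ Real.exp (-ε) * (Real.exp ε * polymerZtrunc C w k) :=
          mul_le_mul_of_nonneg_left h2 (le_of_lt (Real.exp_pos _))
      _ = polymerZtrunc C w k := by
          rw [← mul_assoc, ← Real.exp_add, neg_add_cancel, Real.exp_zero, one_mul]
  have hexpe : 1 - Real.exp (-ε) ≤ ε := by
    have := Real.add_one_le_exp (-ε)
    linarith
  rw [← hsdiff, hpart1, hpart2, div_self (ne_of_gt hZkpos)]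
  have hZZ : (polymerZ C w - polymerZtrunc C w k) / polymerZ C w
      = 1 - polymerZtrunc C w k / polymerZ C w := by
    rw [sub_div, div_self (ne_of_gt hZpos)]
  rw [hZZ]
  linarith
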